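/- Let v₁ = (0,0,0), v₂ = (1000,0,0), v₃ = (113,462,0), v₄ = (636,−387,71), v₅ = (194,203,−605), v₆ = (304,−194,307), v₇ = (830,447,−253), v₈ = (330,−176,−855), v₉ = (570,−354,99), v₁₀ = (622,136,−771) in ℝ³, and define edge vectors eᵢ = v_{i+1} − vᵢ for i = 1, …, 9 and e₁₀ = v₁ − v₁₀. Then there is no w ∈ ℝ³ such that (−1)^{i+1} (w · eᵢ) > 0 for every i ∈ {1, …, 10}. -/

import Mathlib

/-- The vertices of the paper's 10-stick polygonal realization of the knot `8_11`.
Here `vert8_11 i` is the paper's vertex `v_(i+1)`. -/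
noncomputable def vert8_11 : Fin 10 → (Fin 3 → ℝ) :=
  ![![0, 0, 0], ![1000, 0, 0], ![113, 462, 0], ![636, -387, 71], ![194, 203, -605], ![304, -194, 307], ![830, 447, -253], ![330, -176, -855], ![570, -354, 99], ![622, 136, -771]]

/-- The edge vectors `eᵢ = v_(i+1) − vᵢ` (cyclically, so `e₁₀ = v₁ − v₁₀`);
here `edge8_11 i` is the paper's `e_(i+1)`, using wrap-around addition on `Fin 10`. -/
noncomputable def edge8_11 (i : Fin 10) : Fin 3 → ℝ :=
  vert8_11 (i + 1) - vert8_11 i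

/-- There is no `w ∈ ℝ³` such that `(−1)^(i+1) (w · eᵢ) > 0` for every
`i ∈ {1, …, 10}`: no projection of this polygon (the knot `8_11`) to a line has
5 local maxima. (With 0-based indexing `i : Fin 10`, the sign is `(−1)^i`.) -/
theorem no_alternating_direction_8_11 :
    ¬ ∃ w : Fin 3 → ℝ, ∀ i : Fin 10,
        0 < (-1 : ℝ) ^ (i : ℕ) * ∑ j : Fin 3, w j * edge8_11 i j := by
  rintro ⟨w, h⟩
  have h0 := h 0
  have h4 := h 4
  have h5 := h 5
  have h8 := h 8
  have E0 : edge8_11 0 = ![1000, 0, 0] := by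
    funext j
    fin_cases j <;>
      simp [edge8_11, show vert8_11 1 = ![1000, 0, 0] from rfl,
        show vert8_11 0 = ![0, 0, 0] from rfl]
  have E4 : edge8_11 4 = ![110, -397, 912] := by
    funext j
    fin_cases j <;>
      · simp [edge8_11, show vert8_11 5 = ![304, -194, 307] from rfl,
          show vert8_11 4 = ![194, 203, -605] from rfl]
        norm_num
  have E5 : edge8_11 5 = ![526, 641, -560] := by
    funext j
    fin_cases j <;>
      · simp [edge8_11, show vert8_11 6 = ![830, 447, -253] from rfl,
          show vert8_11 5 = ![304, -194, 307] from rfl]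
        norm_num
  have E8 : edge8_11 8 = ![52, 490, -870] := by
    funext j
    fin_cases j <;>
      · simp [edge8_11, show vert8_11 9 = ![622, 136, -771] from rfl,
          show vert8_11 8 = ![570, -354, 99] from rfl]
        norm_num
  rw [E0] at h0
  rw [E4] at h4
  rw [E5] at h5
  rw [E8] at h8
  norm_num [Fin.sum_univ_three, Matrix.cons_val_two, Matrix.tail_cons, Matrix.head_cons, show ((4 : Fin 10) : ℕ) = 4 from rfl,
    show ((5 : Fin 10) : ℕ) = 5 from rfl, show ((8 : Fin 10) : ℕ) = 8 from rfl]
    at h0 h4 h5 h8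
  linarith
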